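/- Let n ≥ 3 and let X_1, ..., X_n be i.i.d. random variables uniformly distributed on [0, 1] on a probability space (Ω, 𝓕, P), with order statistics X_{1:n} ≤ ... ≤ X_{n:n}. Then E[(X_{n:n} − E[X_{n:n} | σ(X_{n-1:n})])²] ≤ E[(X_{n:n} − E[X_{n:n} | σ(X_{n-2:n})])²]; i.e., the second largest order statistic yields a better mean-square predictor of the maximum than the third largest. -/

import Mathlib

open MeasureTheory ProbabilityTheory

/-- `orderStat X k ω` is the `(k+1)`-th smallest value among `X 0 ω, …, X (n-1) ω`
(0-indexed, in increasing order); thus `orderStat X (n-1)` is the maximum `X_{n:n}`,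
`orderStat X (n-2)` is `X_{n-1:n}` and `orderStat X (n-3)` is `X_{n-2:n}`. -/
noncomputable def orderStat {Ω : Type*} {n : ℕ} (X : Fin n → Ω → ℝ) (k : ℕ)
    (ω : Ω) : ℝ :=
  ((Multiset.map (fun i => X i ω) Finset.univ.val).sort (· ≤ ·)).getD k 0

lemma sorted_getElem_le {l : List ℝ} (hl : l.Pairwise (· ≤ ·)) {a b : ℕ} (ha : a < l.length)
    (hb : b < l.length) (hab : a ≤ b) : l[a] ≤ l[b] := by
  have := hl.rel_get_of_le (a := ⟨a, ha⟩) (b := ⟨b, hb⟩) (by simpa using hab)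
  simpa [List.get_eq_getElem] using this

lemma sorted_getD_le_iff {l : List ℝ} (hl : l.Pairwise (· ≤ ·)) {k : ℕ} (hk : k < l.length)
    (t : ℝ) : l.getD k 0 ≤ t ↔ k + 1 ≤ l.countP (fun x => decide (x ≤ t)) := by
  rw [List.getD_eq_getElem l 0 hk]
  constructor
  · intro h
    have htake : (l.take (k+1)).countP (fun x => decide (x ≤ t)) = (l.take (k+1)).length := by
      rw [List.countP_eq_length]
      intro a ha
      obtain ⟨m, hm, rfl⟩ := List.mem_iff_getElem.1 ha
      rw [List.getElem_take]
      simp only [decide_eq_true_eq]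
      have hmk : m ≤ k := by
        have := hm
        simp [List.length_take] at this
        omega
      exact le_trans (sorted_getElem_le hl (by omega) hk hmk) h
    calc k + 1 = (l.take (k+1)).length := by simp [List.length_take]; omega
      _ = (l.take (k+1)).countP _ := htake.symm
      _ ≤ l.countP (fun x => decide (x ≤ t)) := by
          conv_rhs => rw [← List.take_append_drop (k+1) l]
          rw [List.countP_append]; omega
  · intro h
    by_contra hlt
    push_neg at hlt
    have hdrop : (l.drop k).countP (fun x => decide (x ≤ t)) = 0 := by
      rw [List.countP_eq_zero]
      intro a ha
      obtain ⟨m, hm, rfl⟩ := List.mem_iff_getElem.1 ha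
      rw [List.getElem_drop]
      simp only [decide_eq_true_eq, not_le]
      refine lt_of_lt_of_le hlt ?_
      have hmlen : k + m < l.length := by
        have := hm; simp [List.length_drop] at this; omega
      exact sorted_getElem_le hl hk hmlen (by omega)
    have : l.countP (fun x => decide (x ≤ t)) ≤ k := by
      conv_lhs => rw [← List.take_append_drop k l]
      rw [List.countP_append, hdrop, Nat.add_zero]
      calc (l.take k).countP _ ≤ (l.take k).length := List.countP_le_length
        _ ≤ k := by simp [List.length_take]
    omega
lemma orderStat_le_iff {Ω : Type*} {n : ℕ} (X : Fin n → Ω → ℝ) {k : ℕ} (hk : k < n)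
    (ω : Ω) (t : ℝ) :
    orderStat X k ω ≤ t ↔ k + 1 ≤ (Finset.univ.filter (fun i => X i ω ≤ t)).card := by
  set s : Multiset ℝ := Multiset.map (fun i => X i ω) Finset.univ.val with hs
  have hlen : (s.sort (· ≤ ·)).length = n := by
    rw [Multiset.length_sort, hs, Multiset.card_map]
    simpa using (Finset.card_univ (α := Fin n))
  rw [orderStat, sorted_getD_le_iff (Multiset.pairwise_sort _ _) (by rw [hlen]; exact hk)]
  have hcount : (s.sort (· ≤ ·)).countP (fun x => decide (x ≤ t))
      = (Finset.univ.filter (fun i => X i ω ≤ t)).card := by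
    have h1 : (s.sort (· ≤ ·)).countP (fun x => decide (x ≤ t))
        = Multiset.countP (fun x => x ≤ t) s := by
      rw [← Multiset.coe_countP, Multiset.sort_eq]
    rw [h1, hs, Multiset.countP_map]
    rfl
  rw [hcount]

lemma measurable_orderStat {Ω : Type*} [MeasurableSpace Ω] {n : ℕ} {X : Fin n → Ω → ℝ}
    (hX : ∀ i, Measurable (X i)) {k : ℕ} (hk : k < n) : Measurable (orderStat X k) := by
  apply measurable_of_Iic
  intro t
  have : orderStat X k ⁻¹' Set.Iic t
      = {ω | k + 1 ≤ (Finset.univ.filter (fun i => X i ω ≤ t)).card} := by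
    ext ω; simpa using orderStat_le_iff X hk ω t
  rw [this]
  have hN : Measurable (fun ω => (Finset.univ.filter (fun i => X i ω ≤ t)).card) := by
    have : (fun ω => (Finset.univ.filter (fun i => X i ω ≤ t)).card)
        = fun ω => ∑ i : Fin n, if X i ω ≤ t then 1 else 0 := by
      funext ω; rw [Finset.card_filter]
    rw [this]
    exact Finset.measurable_sum _ fun i _ => Measurable.ite ((hX i) measurableSet_Iic)
      measurable_const measurable_const
  exact hN (by trivial)

-- order stat value is one of the X i
lemma orderStat_mem {Ω : Type*} {n : ℕ} (X : Fin n → Ω → ℝ) {k : ℕ} (hk : k < n) (ω : Ω) :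
    ∃ i, orderStat X k ω = X i ω := by
  set s : Multiset ℝ := Multiset.map (fun i => X i ω) Finset.univ.val with hs
  have hlen : (s.sort (· ≤ ·)).length = n := by
    rw [Multiset.length_sort, hs, Multiset.card_map]
    simpa using (Finset.card_univ (α := Fin n))
  have hmem : orderStat X k ω ∈ s.sort (· ≤ ·) := by
    rw [orderStat, List.getD_eq_getElem _ 0 (by rw [hlen]; exact hk)]
    exact List.getElem_mem _
  rw [← Multiset.mem_coe, Multiset.sort_eq, hs] at hmem
  obtain ⟨i, _, hi⟩ := Multiset.mem_map.1 hmem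
  exact ⟨i, hi.symm⟩
lemma sort_eq_ofFn {n : ℕ} (v : Fin n → ℝ) (σ : Equiv.Perm (Fin n))
    (hσ : Monotone (v ∘ σ)) :
    (Multiset.map v Finset.univ.val).sort (· ≤ ·) = List.ofFn (v ∘ σ) := by
  have hperm : ((Multiset.map v Finset.univ.val).sort (· ≤ ·) : Multiset ℝ)
      = (List.ofFn (v ∘ σ) : Multiset ℝ) := by
    rw [Multiset.sort_eq]
    have : (List.ofFn (v ∘ σ) : Multiset ℝ) = Multiset.map (v ∘ σ) Finset.univ.val := by
      rw [List.ofFn_eq_map]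
      rfl
    rw [this, ← Multiset.map_map]
    congr 1
    have := Finset.map_univ_equiv σ
    calc Finset.univ.val = (Finset.univ.map σ.toEmbedding).val := by rw [Finset.map_univ_equiv]
      _ = Multiset.map σ Finset.univ.val := Finset.map_val _ _
  exact List.Perm.eq_of_pairwise' (Multiset.pairwise_sort _ _)
    (List.sortedLE_ofFn_iff.2 hσ).pairwise (Quotient.exact hperm)

lemma orderStat_eq_of_strictMono {Ω : Type*} {n : ℕ} (X : Fin n → Ω → ℝ) (ω : Ω)
    (σ : Equiv.Perm (Fin n)) (hσ : StrictMono (fun m => X (σ m) ω)) {k : ℕ} (hk : k < n) :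
    orderStat X k ω = X (σ ⟨k, hk⟩) ω := by
  rw [orderStat, sort_eq_ofFn (fun i => X i ω) σ hσ.monotone,
    List.getD_eq_getElem _ 0 (by simpa using hk), List.getElem_ofFn]
  rfl

lemma exists_strictMono_perm {n : ℕ} (v : Fin n → ℝ) (hv : Function.Injective v) :
    ∃ σ : Equiv.Perm (Fin n), StrictMono (v ∘ σ) := by
  refine ⟨Tuple.sort v, Monotone.strictMono_of_injective (Tuple.monotone_sort v)
    (hv.comp (Tuple.sort v).injective)⟩

lemma perm_unique_strictMono {n : ℕ} {v : Fin n → ℝ} (hv : Function.Injective v)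
    {σ τ : Equiv.Perm (Fin n)} (hσ : StrictMono (v ∘ σ)) (hτ : StrictMono (v ∘ τ)) :
    σ = τ := by
  have h := Tuple.unique_monotone (f := v) hσ.monotone hτ.monotone
  ext m : 1
  exact hv (congrFun h m)
lemma strictMono_iff_chain {n : ℕ} (f : Fin n → ℝ) :
    StrictMono f ↔ ∀ m : ℕ, ∀ h : m + 1 < n, f ⟨m, by omega⟩ < f ⟨m + 1, h⟩ := by
  constructor
  · intro hf m h
    exact hf (by simp [Fin.mk_lt_mk])
  · intro h
    have key : ∀ q : ℕ, ∀ hq : q < n, ∀ p : ℕ, ∀ hp : p < q, f ⟨p, by omega⟩ < f ⟨q, hq⟩ := by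
      intro q
      induction q with
      | zero => intro _ p hp; omega
      | succ q ih =>
        intro hq p hp
        rcases Nat.lt_succ_iff_lt_or_eq.1 hp with h1 | h1
        · exact lt_trans (ih (by omega) p h1) (h q hq)
        · subst h1; exact h p hq
    intro p q hpq
    have := key q.1 q.2 p.1 hpq
    simpa [Fin.eta] using this
open MeasureTheory intervalIntegral in
lemma key_uniform_integral (s : ℝ) (hs : s ∈ Set.Icc (0:ℝ) 1) :
    ∫ t, (if s < t then t - (1+s)/2 else 0) ∂(volume.restrict (Set.Icc (0:ℝ) 1)) = 0 := by
  have h1 : ∀ t : ℝ, (if s < t then t - (1+s)/2 else 0)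
      = Set.indicator (Set.Ioi s) (fun t => t - (1+s)/2) t := by
    intro t
    by_cases h : s < t <;> simp [Set.indicator, h]
  simp_rw [h1]
  rw [MeasureTheory.integral_indicator measurableSet_Ioi, Measure.restrict_restrict measurableSet_Ioi]
  have h2 : Set.Ioi s ∩ Set.Icc (0:ℝ) 1 = Set.Ioc s 1 := by
    ext t
    simp only [Set.mem_inter_iff, Set.mem_Ioi, Set.mem_Icc, Set.mem_Ioc]
    constructor
    · rintro ⟨h3, _, h5⟩; exact ⟨h3, h5⟩
    · rintro ⟨h3, h4⟩; exact ⟨h3, le_trans hs.1 h3.le, h4⟩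
  rw [h2, ← intervalIntegral.integral_of_le hs.2,
    intervalIntegral.integral_sub intervalIntegrable_id intervalIntegrable_const]
  simp [integral_id]
  ring
lemma integral_sq_sub_condexp_le {α : Type*} {m m0 : MeasurableSpace α} (hm : m ≤ m0)
    {μ : Measure α} [IsProbabilityMeasure μ] {Y Z : α → ℝ}
    (hYm : AEStronglyMeasurable Y μ) (hYb : ∀ᵐ ω ∂μ, |Y ω| ≤ 1)
    (hZm : AEStronglyMeasurable[m] Z μ) (hZb : ∀ᵐ ω ∂μ, |Z ω| ≤ 1) :
    ∫ ω, (Y ω - (μ[Y|m]) ω) ^ 2 ∂μ ≤ ∫ ω, (Y ω - Z ω) ^ 2 ∂μ := by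
  haveI : SigmaFinite (μ.trim hm) := by infer_instance
  have hYint : Integrable Y μ := by
    refine Integrable.mono' (integrable_const 1) hYm ?_
    filter_upwards [hYb] with ω h using by simpa [Real.norm_eq_abs] using h
  set C : α → ℝ := μ[Y|m] with hC
  have hCb : ∀ᵐ ω ∂μ, |C ω| ≤ 1 := by
    have := ae_bdd_condExp_of_ae_bdd (m := m) (μ := μ) (R := 1) (f := Y) (by simpa using hYb)
    simpa using this
  have hCm' : AEStronglyMeasurable[m] C μ :=
    stronglyMeasurable_condExp.aestronglyMeasurable
  have hCm0 : AEStronglyMeasurable C μ :=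
    (stronglyMeasurable_condExp.mono hm).aestronglyMeasurable
  have hZm0 : AEStronglyMeasurable Z μ :=
    ((hZm.stronglyMeasurable_mk.mono hm).aestronglyMeasurable).congr hZm.ae_eq_mk.symm
  set D : α → ℝ := fun ω => C ω - Z ω with hD
  have hDm' : AEStronglyMeasurable[m] D μ := hCm'.sub hZm
  have hDm0 : AEStronglyMeasurable D μ := hCm0.sub hZm0
  have hDb : ∀ᵐ ω ∂μ, |D ω| ≤ 2 := by
    filter_upwards [hCb, hZb] with ω h1 h2
    calc |C ω - Z ω| ≤ |C ω| + |Z ω| := abs_sub _ _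
      _ ≤ 2 := by linarith
  have hYCint : Integrable (fun ω => Y ω - C ω) μ := hYint.sub integrable_condExp
  have hprod_int : Integrable (fun ω => D ω * (Y ω - C ω)) μ := by
    refine Integrable.mono' (integrable_const 4) (hDm0.mul (hYm.sub hCm0)) ?_
    filter_upwards [hDb, hYb, hCb] with ω h1 h2 h3
    rw [Real.norm_eq_abs]
    calc |D ω * (Y ω - C ω)| = |D ω| * |Y ω - C ω| := abs_mul _ _
      _ ≤ 2 * 2 := by
          refine mul_le_mul h1 ((abs_sub _ _).trans (by linarith)) (abs_nonneg _) (by norm_num)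
      _ = 4 := by norm_num
  have hcond0 : μ[(fun ω => Y ω - C ω)|m] =ᵐ[μ] 0 := by
    have h1 : μ[(fun ω => Y ω - C ω)|m] =ᵐ[μ] μ[Y|m] - μ[C|m] :=
      condExp_sub hYint integrable_condExp m
    have h2 : μ[C|m] =ᵐ[μ] μ[Y|m] := condExp_condExp_of_le le_rfl hm
    filter_upwards [h1, h2] with ω e1 e2
    simp only [Pi.sub_apply, Pi.zero_apply] at *
    rw [e1, e2]; ring
  have hcross : ∫ ω, D ω * (Y ω - C ω) ∂μ = 0 := by
    have hpull : μ[D * (fun ω => Y ω - C ω)|m] =ᵐ[μ] D * μ[(fun ω => Y ω - C ω)|m] :=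
      condExp_mul_of_aestronglyMeasurable_left hDm' hprod_int hYCint
    have h1 : ∫ ω, D ω * (Y ω - C ω) ∂μ = ∫ ω, (μ[D * (fun ω => Y ω - C ω)|m]) ω ∂μ :=
      (integral_condExp hm (f := D * (fun ω => Y ω - C ω))).symm
    rw [h1, integral_congr_ae hpull]
    have h0 : (D * μ[(fun ω => Y ω - C ω)|m]) =ᵐ[μ] (fun _ => (0:ℝ)) := by
      filter_upwards [hcond0] with ω h
      simp only [Pi.mul_apply]
      simp only [Pi.zero_apply] at h
      simp [h]
    rw [integral_congr_ae h0, integral_zero]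
  have hsq1 : Integrable (fun ω => (Y ω - C ω) ^ 2) μ := by
    refine Integrable.mono' (integrable_const 4) ((hYm.sub hCm0).pow 2) ?_
    filter_upwards [hYb, hCb] with ω h1 h2
    rw [Real.norm_eq_abs]
    have h3 : |Y ω - C ω| ≤ 2 := (abs_sub _ _).trans (by linarith)
    have h4 := abs_le.1 h3
    rw [abs_of_nonneg (sq_nonneg _)]
    nlinarith
  have hsq2 : Integrable (fun ω => D ω ^ 2) μ := by
    refine Integrable.mono' (integrable_const 4) (hDm0.pow 2) ?_
    filter_upwards [hDb] with ω h1
    rw [Real.norm_eq_abs]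
    have h4 := abs_le.1 h1
    rw [abs_of_nonneg (sq_nonneg _)]
    nlinarith
  have hexp : ∀ ω, (Y ω - Z ω) ^ 2
      = (Y ω - C ω) ^ 2 + (2 * (D ω * (Y ω - C ω)) + D ω ^ 2) := by
    intro ω; simp only [hD]; ring
  have hint2 : Integrable (fun ω => 2 * (D ω * (Y ω - C ω)) + D ω ^ 2) μ :=
    ((hprod_int.const_mul 2).add hsq2)
  have e1 : ∫ ω, (Y ω - Z ω) ^ 2 ∂μ
      = ∫ ω, (Y ω - C ω) ^ 2 ∂μ + ∫ ω, (2 * (D ω * (Y ω - C ω)) + D ω ^ 2) ∂μ := by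
    rw [← integral_add hsq1 hint2]
    exact integral_congr_ae (Filter.Eventually.of_forall fun ω => hexp ω)
  have e2 : ∫ ω, (2 * (D ω * (Y ω - C ω)) + D ω ^ 2) ∂μ
      = 2 * ∫ ω, D ω * (Y ω - C ω) ∂μ + ∫ ω, D ω ^ 2 ∂μ := by
    rw [integral_add (hprod_int.const_mul 2) hsq2, integral_const_mul]
  have h3 : 0 ≤ ∫ ω, D ω ^ 2 ∂μ := integral_nonneg fun ω => sq_nonneg _
  rw [e1, e2, hcross]
  linarith

lemma sigma_piece {Ω : Type*} [MeasurableSpace Ω] {P : Measure Ω} [IsProbabilityMeasure P]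
    {n : ℕ} (hn : 3 ≤ n) (X : Fin n → Ω → ℝ)
    (hX : ∀ i, Measurable (X i))
    (hindep : iIndepFun X P)
    (hlaw : ∀ i, Measure.map (X i) P = volume.restrict (Set.Icc (0 : ℝ) 1))
    (hIcc : ∀ᵐ ω ∂P, ∀ l, X l ω ∈ Set.Icc (0:ℝ) 1)
    {A : Set (ℝ × ℝ)} (hA : MeasurableSet A) (σ : Equiv.Perm (Fin n)) :
    ∫ ω, ({ω : Ω | StrictMono fun m => X (σ m) ω}.indicator
      (fun ω => Set.indicator ((fun ω => (orderStat X (n-2) ω, orderStat X (n-3) ω)) ⁻¹' A)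
        (fun ω => orderStat X (n-1) ω - (1 + orderStat X (n-2) ω)/2) ω)) ω ∂P = 0 := by
  have ha : n - 1 < n := by omega
  have hb : n - 2 < n := by omega
  have hc : n - 3 < n := by omega
  set a : Fin n := ⟨n-1, ha⟩ with ha_def
  set b : Fin n := ⟨n-2, hb⟩ with hb_def
  set c : Fin n := ⟨n-3, hc⟩ with hc_def
  set i : Fin n := σ a with hi_def
  set j : Fin n := σ b with hj_def
  set k : Fin n := σ c with hk_def
  set Tc : Finset (Fin n) := {i}ᶜ with hTc_def
  have hmemT : ∀ l : Fin n, l ≠ i → l ∈ Tc := by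
    intro l hl
    simp [hTc_def, Finset.mem_compl, hl]
  have hab : b ≠ a := by simp [ha_def, hb_def, Fin.ext_iff]; omega
  have hjT : j ∈ Tc := hmemT j (fun h => hab (σ.injective h))
  have hac : c ≠ a := by simp [ha_def, hc_def, Fin.ext_iff]; omega
  have hkT : k ∈ Tc := hmemT k (fun h => hac (σ.injective h))
  -- the rest function
  set R : Ω → (Tc → ℝ) := fun ω x => X x ω with hR_def
  have hRmeas : Measurable R := measurable_pi_lambda _ fun x => hX x
  -- extension of a T-vector by 0 at coordinate i
  set ext : (Tc → ℝ) → Fin n → ℝ := fun r l => if h : l ∈ Tc then r ⟨l, h⟩ else 0 with hext_def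
  have hext_meas : ∀ l : Fin n, Measurable fun r : Tc → ℝ => ext r l := by
    intro l
    by_cases h : l ∈ Tc
    · simpa [hext_def, h] using measurable_pi_apply (⟨l, h⟩ : Tc)
    · simpa [hext_def, h] using measurable_const
  have hextR : ∀ ω, ∀ l : Fin n, l ∈ Tc → ext (R ω) l = X l ω := by
    intro ω l hl
    simp [hext_def, hl, hR_def]
  -- the two factors
  set S : Set (Tc → ℝ) := {r | (ext r j, ext r k) ∈ A} ∩
      ((⋂ (m : ℕ), ⋂ (hm : m + 1 < n - 1),
        {r | ext r (σ ⟨m, by omega⟩) < ext r (σ ⟨m+1, by omega⟩)}) ∩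
      {r | ext r j ∈ Set.Icc (0:ℝ) 1}) with hS_def
  have hSmem : ∀ r : Tc → ℝ, r ∈ S ↔ ((ext r j, ext r k) ∈ A ∧
      (∀ m : ℕ, ∀ hm : m + 1 < n - 1, ext r (σ ⟨m, by omega⟩) < ext r (σ ⟨m+1, by omega⟩)) ∧
      ext r j ∈ Set.Icc (0:ℝ) 1) := by
    intro r
    simp only [hS_def, Set.mem_inter_iff, Set.mem_iInter, Set.mem_setOf_eq]
  have hSmeas : MeasurableSet S := by
    refine MeasurableSet.inter ?_ (MeasurableSet.inter ?_ ?_)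
    · exact ((hext_meas j).prodMk (hext_meas k)) hA
    · exact MeasurableSet.iInter fun m => MeasurableSet.iInter fun hm =>
        measurableSet_lt (hext_meas _) (hext_meas _)
    · exact (hext_meas j) measurableSet_Icc
  set C : (Tc → ℝ) → ℝ := S.indicator (fun _ => 1) with hC_def
  have hCmeas : Measurable C := measurable_const.indicator hSmeas
  have hC01 : ∀ r, C r = 0 ∨ C r = 1 := by
    intro r
    by_cases h : r ∈ S <;> simp [hC_def, h]
  set ψ : ℝ → ℝ → ℝ := fun s t => if s < t then t - (1+s)/2 else 0 with hψ_def
  have hψmeas : Measurable fun p : ℝ × ℝ => ψ p.1 p.2 := by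
    refine Measurable.ite (measurableSet_lt measurable_fst measurable_snd) ?_ measurable_const
    exact measurable_snd.sub ((measurable_const.add measurable_fst).div_const 2)
  set Φ : ℝ × (Tc → ℝ) → ℝ := fun p => C p.2 * ψ (ext p.2 j) p.1 with hΦ_def
  have hΦmeas : Measurable Φ := by
    refine (hCmeas.comp measurable_snd).mul ?_
    exact hψmeas.comp (((hext_meas j).comp measurable_snd).prodMk measurable_fst)
  -- independence
  have hIF : IndepFun (X i) R P := by
    have h1 := hindep.indepFun_finset {i} Tc disjoint_compl_right hX
    exact h1.comp (measurable_pi_apply (⟨i, Finset.mem_singleton_self i⟩ :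
      ({i} : Finset (Fin n)))) measurable_id
  have hmap : P.map (fun ω => (X i ω, R ω)) = (P.map (X i)).prod (P.map R) :=
    (indepFun_iff_map_prod_eq_prod_map_map (hX i).aemeasurable hRmeas.aemeasurable).1 hIF
  have hmemchain : ∀ m : ℕ, ∀ h : m < n - 1, σ ⟨m, by omega⟩ ∈ Tc := by
    intro m h
    refine hmemT _ (fun heq => ?_)
    have h2 := σ.injective heq
    rw [Fin.ext_iff] at h2
    simp only [ha_def] at h2
    omega
  have hOS : ∀ ω, StrictMono (fun m => X (σ m) ω) →
      (orderStat X (n-1) ω = X i ω ∧ orderStat X (n-2) ω = X j ω ∧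
        orderStat X (n-3) ω = X k ω) := by
    intro ω hω
    exact ⟨orderStat_eq_of_strictMono X ω σ hω ha, orderStat_eq_of_strictMono X ω σ hω hb,
      orderStat_eq_of_strictMono X ω σ hω hc⟩
  -- a.e. identification
  have hae : (fun ω => ({ω : Ω | StrictMono fun m => X (σ m) ω}.indicator
      (fun ω => Set.indicator ((fun ω => (orderStat X (n-2) ω, orderStat X (n-3) ω)) ⁻¹' A)
        (fun ω => orderStat X (n-1) ω - (1 + orderStat X (n-2) ω)/2) ω)) ω)
      =ᵐ[P] fun ω => Φ (X i ω, R ω) := by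
    filter_upwards [hIcc] with ω hωIcc
    have hextj : ext (R ω) j = X j ω := hextR ω j hjT
    have hextk : ext (R ω) k = X k ω := hextR ω k hkT
    by_cases hω : StrictMono (fun m => X (σ m) ω)
    · obtain ⟨hY, hW2, hW3⟩ := hOS ω hω
      have hchain : ∀ m : ℕ, ∀ hm : m + 1 < n - 1,
          ext (R ω) (σ ⟨m, by omega⟩) < ext (R ω) (σ ⟨m+1, by omega⟩) := by
        intro m hm
        rw [hextR _ _ (hmemchain m (by omega)), hextR _ _ (hmemchain (m+1) (by omega))]
        exact hω (Fin.mk_lt_mk.2 (by omega))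
      have hji : X j ω < X i ω := by
        have : b < a := Fin.mk_lt_mk.2 (by omega)
        exact hω this
      rw [Set.indicator_of_mem (show ω ∈ {ω : Ω | StrictMono fun m => X (σ m) ω} from hω)]
      by_cases hAmem : (orderStat X (n-2) ω, orderStat X (n-3) ω) ∈ A
      · rw [Set.indicator_of_mem (by exact hAmem)]
        have hCr : C (R ω) = 1 := by
          rw [hC_def, Set.indicator_of_mem]
          rw [hSmem]
          refine ⟨?_, hchain, ?_⟩
          · rw [hextj, hextk, ← hW2, ← hW3]; exact hAmem
          · rw [hextj]; exact hωIcc j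
        show _ = C (R ω) * ψ (ext (R ω) j) (X i ω)
        rw [hCr, one_mul, hψ_def]
        simp only [hextj]
        rw [if_pos hji, hY, hW2]
      · rw [Set.indicator_of_notMem (by exact hAmem)]
        have hCr : C (R ω) = 0 := by
          rw [hC_def, Set.indicator_of_notMem]
          rw [hSmem]
          push_neg
          intro h1
          exfalso
          apply hAmem
          rw [hextj, hextk, ← hW2, ← hW3] at h1
          exact h1
        show (0:ℝ) = C (R ω) * ψ (ext (R ω) j) (X i ω)
        rw [hCr, zero_mul]
    · rw [Set.indicator_of_notMem (show ω ∉ {ω : Ω | StrictMono fun m => X (σ m) ω} from hω)]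
      show (0:ℝ) = C (R ω) * ψ (ext (R ω) j) (X i ω)
      by_cases hCr : R ω ∈ S
      · by_cases hji : X j ω < X i ω
        · exfalso
          apply hω
          rw [strictMono_iff_chain]
          intro m hm
          rcases Nat.lt_or_ge (m+1) (n-1) with h1 | h1
          · have h2 := ((hSmem (R ω)).1 hCr).2.1 m h1
            rwa [hextR _ _ (hmemchain m (by omega)),
              hextR _ _ (hmemchain (m+1) (by omega))] at h2
          · have hm1 : m = n - 2 := by omega
            have e1 : (⟨m+1, hm⟩ : Fin n) = a := Fin.ext (by simp [ha_def]; omega)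
            have e2 : (⟨m, by omega⟩ : Fin n) = b := Fin.ext (by simp [hb_def]; omega)
            rw [e1, e2]
            exact hji
        · rw [hψ_def]
          simp only [hextj]
          rw [if_neg hji, mul_zero]
      · have : C (R ω) = 0 := by rw [hC_def, Set.indicator_of_notMem hCr]
        rw [this, zero_mul]
  rw [integral_congr_ae hae]
  have hpairmeas : Measurable fun ω => (X i ω, R ω) := (hX i).prodMk hRmeas
  rw [← integral_map hpairmeas.aemeasurable hΦmeas.aestronglyMeasurable, hmap, hlaw i]
  set μ0 := volume.restrict (Set.Icc (0:ℝ) 1) with hμ0_def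
  haveI hμ0prob : IsProbabilityMeasure μ0 := by
    rw [← hlaw i]
    exact Measure.isProbabilityMeasure_map (hX i).aemeasurable
  haveI : IsProbabilityMeasure (P.map R) := Measure.isProbabilityMeasure_map hRmeas.aemeasurable
  have hint : Integrable Φ (μ0.prod (P.map R)) := by
    refine Integrable.mono' (integrable_const 2) hΦmeas.aestronglyMeasurable ?_
    have hae1 : ∀ᵐ p ∂(μ0.prod (P.map R)), p.1 ∈ Set.Icc (0:ℝ) 1 := by
      rw [ae_iff]
      have he : {p : ℝ × (Tc → ℝ) | ¬ p.1 ∈ Set.Icc (0:ℝ) 1}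
          = (Set.Icc (0:ℝ) 1)ᶜ ×ˢ (Set.univ : Set (Tc → ℝ)) := by
        ext p; simp
      rw [he, Measure.prod_prod]
      have : μ0 (Set.Icc (0:ℝ) 1)ᶜ = 0 := by
        rw [hμ0_def, Measure.restrict_apply measurableSet_Icc.compl]
        simp
      rw [this, zero_mul]
    filter_upwards [hae1] with p hp
    rw [Real.norm_eq_abs]
    rcases hC01 p.2 with h0 | h1
    · have : Φ p = 0 := by
        show C p.2 * _ = 0
        rw [h0, zero_mul]
      rw [this]; norm_num
    · have hpS : p.2 ∈ S := by
        by_contra hne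
        rw [hC_def, Set.indicator_of_notMem hne] at h1
        norm_num at h1
      have hj01 := ((hSmem p.2).1 hpS).2.2
      have : Φ p = ψ (ext p.2 j) p.1 := by
        show C p.2 * _ = _
        rw [h1, one_mul]
      rw [this]
      simp only [hψ_def]
      by_cases hlt : ext p.2 j < p.1
      · rw [if_pos hlt, abs_le]
        constructor
        · have := hp.1; have := hj01.2; linarith
        · have := hp.2; have := hj01.1; linarith
      · rw [if_neg hlt]; norm_num
  rw [integral_prod_symm Φ hint]
  have hinner : ∀ r : Tc → ℝ, ∫ t, Φ (t, r) ∂μ0 = 0 := by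
    intro r
    have hrw : ∀ t, Φ (t, r) = C r * ψ (ext r j) t := fun t => rfl
    simp_rw [hrw]
    rw [integral_const_mul]
    by_cases hj01 : ext r j ∈ Set.Icc (0:ℝ) 1
    · have h0 : ∫ t, ψ (ext r j) t ∂μ0 = 0 := by
        rw [hψ_def, hμ0_def]
        exact key_uniform_integral _ hj01
      rw [h0, mul_zero]
    · have : C r = 0 := by
        rw [hC_def, Set.indicator_of_notMem]
        intro hS'
        exact hj01 ((hSmem r).1 hS').2.2
      rw [this, zero_mul]
  simp_rw [hinner]
  rw [integral_zero]

lemma key_setIntegral {Ω : Type*} [MeasurableSpace Ω] {P : Measure Ω} [IsProbabilityMeasure P]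
    {n : ℕ} (hn : 3 ≤ n) (X : Fin n → Ω → ℝ)
    (hX : ∀ i, Measurable (X i))
    (hindep : iIndepFun X P)
    (hlaw : ∀ i, Measure.map (X i) P = volume.restrict (Set.Icc (0 : ℝ) 1)) :
    ∀ A : Set (ℝ × ℝ), MeasurableSet A →
    ∫ ω in ((fun ω => (orderStat X (n-2) ω, orderStat X (n-3) ω)) ⁻¹' A),
      (orderStat X (n-1) ω - (1 + orderStat X (n-2) ω)/2) ∂P = 0 := by
  intro A hA
  have hIcc1 : ∀ l : Fin n, ∀ᵐ ω ∂P, X l ω ∈ Set.Icc (0:ℝ) 1 := by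
    intro l
    have h0 : P (X l ⁻¹' (Set.Icc (0:ℝ) 1)ᶜ) = 0 := by
      rw [← Measure.map_apply (hX l) measurableSet_Icc.compl, hlaw l,
        Measure.restrict_apply measurableSet_Icc.compl]
      simp
    rw [ae_iff]
    have he : {ω | ¬ X l ω ∈ Set.Icc (0:ℝ) 1} = X l ⁻¹' (Set.Icc (0:ℝ) 1)ᶜ := by
      ext ω; simp
    rw [he]
    exact h0
  have hIcc : ∀ᵐ ω ∂P, ∀ l, X l ω ∈ Set.Icc (0:ℝ) 1 := ae_all_iff.2 hIcc1
  have hinj : ∀ᵐ ω ∂P, Function.Injective fun l => X l ω := by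
    have hpair : ∀ p q : Fin n, p ≠ q → ∀ᵐ ω ∂P, X p ω ≠ X q ω := by
      intro p q hpq
      have hIF : IndepFun (X p) (X q) P := hindep.indepFun hpq
      have hmap : P.map (fun ω => (X p ω, X q ω)) = (P.map (X p)).prod (P.map (X q)) :=
        (indepFun_iff_map_prod_eq_prod_map_map (hX p).aemeasurable (hX q).aemeasurable).1 hIF
      have hdiag : MeasurableSet {r : ℝ × ℝ | r.1 = r.2} :=
        (isClosed_eq continuous_fst continuous_snd).measurableSet
      have h0 : P ((fun ω => (X p ω, X q ω)) ⁻¹' {r : ℝ × ℝ | r.1 = r.2}) = 0 := by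
        rw [← Measure.map_apply ((hX p).prodMk (hX q)) hdiag, hmap, hlaw p, hlaw q,
          Measure.prod_apply hdiag]
        have : ∀ x : ℝ, (volume.restrict (Set.Icc (0:ℝ) 1))
            (Prod.mk x ⁻¹' {r : ℝ × ℝ | r.1 = r.2}) = 0 := by
          intro x
          have he : Prod.mk x ⁻¹' {r : ℝ × ℝ | r.1 = r.2} = {x} := by
            ext y; simp [eq_comm]
          rw [he, Measure.restrict_apply (measurableSet_singleton x)]
          exact measure_mono_null Set.inter_subset_left (Real.volume_singleton)
        simp [this]
      rw [ae_iff]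
      have he2 : {ω | ¬ X p ω ≠ X q ω}
          = (fun ω => (X p ω, X q ω)) ⁻¹' {r : ℝ × ℝ | r.1 = r.2} := by
        ext ω; simp
      rw [he2]
      exact h0
    have hall : ∀ᵐ ω ∂P, ∀ p q : Fin n, p ≠ q → X p ω ≠ X q ω := by
      rw [ae_all_iff]
      intro p
      rw [ae_all_iff]
      intro q
      by_cases hpq : p = q
      · exact Filter.Eventually.of_forall fun ω h => absurd hpq h
      · filter_upwards [hpair p q hpq] with ω h _ using h
    filter_upwards [hall] with ω h
    intro p q heq
    by_contra hne
    exact h p q hne heq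
  have mY : Measurable (orderStat X (n-1)) := measurable_orderStat hX (by omega)
  have mW2 : Measurable (orderStat X (n-2)) := measurable_orderStat hX (by omega)
  have mW3 : Measurable (orderStat X (n-3)) := measurable_orderStat hX (by omega)
  have hpre : MeasurableSet ((fun ω => (orderStat X (n-2) ω, orderStat X (n-3) ω)) ⁻¹' A) :=
    (mW2.prodMk mW3) hA
  set F : Ω → ℝ := fun ω => Set.indicator
      ((fun ω => (orderStat X (n-2) ω, orderStat X (n-3) ω)) ⁻¹' A)
      (fun ω => orderStat X (n-1) ω - (1 + orderStat X (n-2) ω)/2) ω with hF_def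
  rw [← integral_indicator hpre]
  show ∫ ω, F ω ∂P = 0
  have hFmeas : Measurable F :=
    (mY.sub ((measurable_const.add mW2).div_const 2)).indicator hpre
  have hFbdd : ∀ᵐ ω ∂P, ‖F ω‖ ≤ 2 := by
    filter_upwards [hIcc] with ω hω
    have hY : orderStat X (n-1) ω ∈ Set.Icc (0:ℝ) 1 := by
      obtain ⟨l, hl⟩ := orderStat_mem X (show n-1 < n by omega) ω
      rw [hl]; exact hω l
    have hW : orderStat X (n-2) ω ∈ Set.Icc (0:ℝ) 1 := by
      obtain ⟨l, hl⟩ := orderStat_mem X (show n-2 < n by omega) ω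
      rw [hl]; exact hω l
    simp only [hF_def, Real.norm_eq_abs]
    by_cases hmem : ω ∈ (fun ω => (orderStat X (n-2) ω, orderStat X (n-3) ω)) ⁻¹' A
    · rw [Set.indicator_of_mem hmem]
      rw [abs_le]
      exact ⟨by have := hY.1; have := hW.2; linarith, by have := hY.2; have := hW.1; linarith⟩
    · rw [Set.indicator_of_notMem hmem]
      norm_num
  have hFint : Integrable F P :=
    Integrable.mono' (integrable_const 2) hFmeas.aestronglyMeasurable hFbdd
  have hEmeas : ∀ σ : Equiv.Perm (Fin n),
      MeasurableSet {ω : Ω | StrictMono fun m => X (σ m) ω} := by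
    intro σ
    have he : {ω : Ω | StrictMono fun m => X (σ m) ω}
        = ⋂ (m : ℕ), ⋂ (h : m + 1 < n),
          {ω : Ω | X (σ ⟨m, by omega⟩) ω < X (σ ⟨m+1, h⟩) ω} := by
      ext ω
      simp only [Set.mem_setOf_eq, Set.mem_iInter]
      exact strictMono_iff_chain _
    rw [he]
    exact MeasurableSet.iInter fun m => MeasurableSet.iInter fun h =>
      measurableSet_lt (hX _) (hX _)
  have hsum : F =ᵐ[P] fun ω => ∑ σ : Equiv.Perm (Fin n),
      ({ω : Ω | StrictMono fun m => X (σ m) ω}.indicator F) ω := by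
    filter_upwards [hinj] with ω hωinj
    obtain ⟨σ₀, hσ₀⟩ := exists_strictMono_perm _ hωinj
    rw [Finset.sum_eq_single σ₀]
    · rw [Set.indicator_of_mem (show ω ∈ {ω : Ω | StrictMono fun m => X (σ₀ m) ω} from hσ₀)]
    · intro τ _ hτ
      apply Set.indicator_of_notMem
      intro hτmem
      exact hτ (perm_unique_strictMono hωinj hτmem hσ₀)
    · intro h
      exact absurd (Finset.mem_univ σ₀) h
  rw [integral_congr_ae hsum]
  rw [integral_finset_sum _ (fun σ _ => hFint.indicator (hEmeas σ))]
  refine Finset.sum_eq_zero fun σ _ => ?_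
  exact sigma_piece hn X hX hindep hlaw hIcc hA σ

lemma aux_le {Ω : Type*} [MeasurableSpace Ω] {P : Measure Ω} [IsProbabilityMeasure P]
    {Y W2 W3 : Ω → ℝ} (mY : Measurable Y) (mW2 : Measurable W2) (mW3 : Measurable W3)
    (hYb : ∀ᵐ ω ∂P, |Y ω| ≤ 1) (hW2b : ∀ᵐ ω ∂P, W2 ω ∈ Set.Icc (0:ℝ) 1)
    (hkey : ∀ A : Set (ℝ × ℝ), MeasurableSet A →
      ∫ ω in ((fun ω => (W2 ω, W3 ω)) ⁻¹' A), (Y ω - (1 + W2 ω)/2) ∂P = 0) :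
    ∫ ω, (Y ω - (P[Y | MeasurableSpace.comap W2 (borel ℝ)]) ω) ^ 2 ∂P
      ≤ ∫ ω, (Y ω - (P[Y | MeasurableSpace.comap W3 (borel ℝ)]) ω) ^ 2 ∂P := by
  have hm2_le_pair : MeasurableSpace.comap W2 (borel ℝ)
      ≤ MeasurableSpace.comap (fun ω => (W2 ω, W3 ω))
        (inferInstance : MeasurableSpace (ℝ × ℝ)) := by
    rw [show W2 = Prod.fst ∘ (fun ω => (W2 ω, W3 ω)) from rfl, ← MeasurableSpace.comap_comp]
    exact MeasurableSpace.comap_mono measurable_fst.comap_le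
  have hm3_le_pair : MeasurableSpace.comap W3 (borel ℝ)
      ≤ MeasurableSpace.comap (fun ω => (W2 ω, W3 ω))
        (inferInstance : MeasurableSpace (ℝ × ℝ)) := by
    rw [show W3 = Prod.snd ∘ (fun ω => (W2 ω, W3 ω)) from rfl, ← MeasurableSpace.comap_comp]
    exact MeasurableSpace.comap_mono measurable_snd.comap_le
  have hmPair_le : MeasurableSpace.comap (fun ω => (W2 ω, W3 ω))
      (inferInstance : MeasurableSpace (ℝ × ℝ)) ≤ _ := (mW2.prodMk mW3).comap_le
  have hm2_le : MeasurableSpace.comap W2 (borel ℝ) ≤ _ := mW2.comap_le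
  have hm3_le : MeasurableSpace.comap W3 (borel ℝ) ≤ _ := mW3.comap_le
  haveI : SigmaFinite (P.trim hmPair_le) := by infer_instance
  haveI : SigmaFinite (P.trim hm2_le) := by infer_instance
  haveI : SigmaFinite (P.trim hm3_le) := by infer_instance
  have hYm0 : AEStronglyMeasurable Y P := mY.aestronglyMeasurable
  have hYint : Integrable Y P := by
    refine Integrable.mono' (integrable_const 1) hYm0 ?_
    filter_upwards [hYb] with ω h using by rwa [Real.norm_eq_abs]
  have hgm2 : Measurable[MeasurableSpace.comap W2 (borel ℝ)] (fun ω => (1 + W2 ω)/2) := by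
    have hW2m2 : Measurable[MeasurableSpace.comap W2 (borel ℝ)] W2 :=
      Measurable.of_comap_le le_rfl
    exact (measurable_const.add hW2m2).div_const 2
  have hgint : Integrable (fun ω => (1 + W2 ω)/2) P := by
    refine Integrable.mono' (integrable_const 1) ((measurable_const.add mW2).div_const
      2).aestronglyMeasurable ?_
    filter_upwards [hW2b] with ω h
    rw [Real.norm_eq_abs, abs_le]
    exact ⟨by linarith [h.1], by linarith [h.2]⟩
  have hcondPair : (fun ω => (1 + W2 ω)/2) =ᵐ[P]
      P[Y | MeasurableSpace.comap (fun ω => (W2 ω, W3 ω))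
        (inferInstance : MeasurableSpace (ℝ × ℝ))] := by
    refine ae_eq_condExp_of_forall_setIntegral_eq hmPair_le hYint
      (fun s _ _ => hgint.integrableOn) ?_
      ((hgm2.mono hm2_le_pair le_rfl).stronglyMeasurable.aestronglyMeasurable)
    rintro s ⟨A, hA, rfl⟩ _
    have h0 := hkey A hA
    rw [integral_sub hYint.integrableOn hgint.integrableOn] at h0
    linarith
  have hcond2 : P[Y | MeasurableSpace.comap W2 (borel ℝ)] =ᵐ[P] (fun ω => (1 + W2 ω)/2) := by
    have h1 := (condExp_condExp_of_le hm2_le_pair hmPair_le (f := Y) (μ := P)).symm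
    have h2 := condExp_congr_ae (m := MeasurableSpace.comap W2 (borel ℝ)) (μ := P)
      hcondPair.symm
    have h3 : P[(fun ω => (1 + W2 ω)/2) | MeasurableSpace.comap W2 (borel ℝ)]
        = fun ω => (1 + W2 ω)/2 :=
      condExp_of_stronglyMeasurable hm2_le hgm2.stronglyMeasurable hgint
    exact h1.trans (h2.trans (by rw [h3]))
  have e1 : ∫ ω, (Y ω - (P[Y | MeasurableSpace.comap W2 (borel ℝ)]) ω) ^ 2 ∂P
      = ∫ ω, (Y ω - (P[Y | MeasurableSpace.comap (fun ω => (W2 ω, W3 ω))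
          (inferInstance : MeasurableSpace (ℝ × ℝ))]) ω) ^ 2 ∂P := by
    refine integral_congr_ae ?_
    filter_upwards [hcond2, hcondPair] with ω h1 h2
    rw [h1, h2]
  rw [e1]
  exact integral_sq_sub_condexp_le hmPair_le hYm0 hYb
    (stronglyMeasurable_condExp.aestronglyMeasurable.mono hm3_le_pair)
    (ae_bdd_condExp_of_ae_bdd (R := 1) (by simpa using hYb))

/-- For `n ≥ 3` i.i.d. uniform(0,1) random variables, the second
largest order statistic yields a better mean-square predictor of the maximum than the
third largest:
`E[(X_{n:n} − E[X_{n:n} | σ(X_{n-1:n})])²] ≤ E[(X_{n:n} − E[X_{n:n} | σ(X_{n-2:n})])²]`. -/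
theorem second_largest_better_predictor_of_max_uniform
    {Ω : Type*} [MeasurableSpace Ω] {P : Measure Ω} [IsProbabilityMeasure P]
    {n : ℕ} (hn : 3 ≤ n) (X : Fin n → Ω → ℝ)
    (hX : ∀ i, Measurable (X i))
    (hindep : iIndepFun X P)
    (hlaw : ∀ i, Measure.map (X i) P = volume.restrict (Set.Icc (0 : ℝ) 1)) :
    ∫ ω, (orderStat X (n - 1) ω -
        (P[orderStat X (n - 1) |
          MeasurableSpace.comap (orderStat X (n - 2)) (borel ℝ)]) ω) ^ 2 ∂P
      ≤ ∫ ω, (orderStat X (n - 1) ω -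
        (P[orderStat X (n - 1) |
          MeasurableSpace.comap (orderStat X (n - 3)) (borel ℝ)]) ω) ^ 2 ∂P := by
  have hIcc1 : ∀ l : Fin n, ∀ᵐ ω ∂P, X l ω ∈ Set.Icc (0:ℝ) 1 := by
    intro l
    have h0 : P (X l ⁻¹' (Set.Icc (0:ℝ) 1)ᶜ) = 0 := by
      rw [← Measure.map_apply (hX l) measurableSet_Icc.compl, hlaw l,
        Measure.restrict_apply measurableSet_Icc.compl]
      simp
    rw [ae_iff]
    have he : {ω | ¬ X l ω ∈ Set.Icc (0:ℝ) 1} = X l ⁻¹' (Set.Icc (0:ℝ) 1)ᶜ := by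
      ext ω; simp
    rw [he]
    exact h0
  have hIcc : ∀ᵐ ω ∂P, ∀ l, X l ω ∈ Set.Icc (0:ℝ) 1 := ae_all_iff.2 hIcc1
  have hYb : ∀ᵐ ω ∂P, |orderStat X (n-1) ω| ≤ 1 := by
    filter_upwards [hIcc] with ω hω
    obtain ⟨l, hl⟩ := orderStat_mem X (show n-1 < n by omega) ω
    rw [hl, abs_le]
    exact ⟨by linarith [(hω l).1], (hω l).2⟩
  have hW2b : ∀ᵐ ω ∂P, orderStat X (n-2) ω ∈ Set.Icc (0:ℝ) 1 := by
    filter_upwards [hIcc] with ω hω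
    obtain ⟨l, hl⟩ := orderStat_mem X (show n-2 < n by omega) ω
    rw [hl]
    exact hω l
  exact aux_le (measurable_orderStat hX (by omega)) (measurable_orderStat hX (by omega))
    (measurable_orderStat hX (by omega)) hYb hW2b
    (key_setIntegral hn X hX hindep hlaw)
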